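/- Assume c(x,A) is convex for every x. Let T > 0, let K ⊆ [0,T]×ℝ^N be compact, and let ν : K → ℝ^N be continuous. Then for every ε > 0 there exists a continuous vector field ṽ : [0,T]×ℝ^N → ℝ^N such that ṽ(t,x) ∈ c(x,A) for all (t,x) ∈ [0,T]×ℝ^N and −ṽ(t,x)·ν(t,x) ≥ H(x,ν(t,x)) − ε for all (t,x) ∈ K. -/

import Mathlib

open MeasureTheory RealInnerProductSpace Metric

/-- Construction of a continuous selection: if `c(x,A)` is convex for every
`x`, `K ⊆ [0,T]×ℝ^N` is compact and `ν` is continuous on `K`, then for every `ε > 0` there is a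
continuous vector field `vt` with `vt(t,x) ∈ c(x,A)` everywhere and
`−vt(t,x)·ν(t,x) ≥ H(x,ν(t,x)) − ε` on `K`. -/
theorem continuous_almost_optimal_field {N : ℕ} (hN : 1 ≤ N)
    {A : Type*} [TopologicalSpace A] [CompactSpace A] [Nonempty A]
    (c : EuclideanSpace ℝ (Fin N) → A → EuclideanSpace ℝ (Fin N))
    (hc : Continuous fun q : EuclideanSpace ℝ (Fin N) × A => c q.1 q.2)
    (hconv : ∀ x, Convex ℝ (Set.range (c x)))
    (H : EuclideanSpace ℝ (Fin N) → EuclideanSpace ℝ (Fin N) → ℝ)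
    (hH : ∀ x p, H x p = ⨆ a : A, -⟪c x a, p⟫)
    (T : ℝ) (hT : 0 < T)
    (K : Set (ℝ × EuclideanSpace ℝ (Fin N))) (hK : IsCompact K)
    (hKsub : K ⊆ Set.Icc 0 T ×ˢ (Set.univ : Set (EuclideanSpace ℝ (Fin N))))
    (ν : ℝ × EuclideanSpace ℝ (Fin N) → EuclideanSpace ℝ (Fin N))
    (hν : ContinuousOn ν K) :
    ∀ ε : ℝ, 0 < ε →
      ∃ vt : ℝ × EuclideanSpace ℝ (Fin N) → EuclideanSpace ℝ (Fin N),
        Continuous vt ∧ (∀ t x, vt (t, x) ∈ Set.range (c x)) ∧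
        ∀ q ∈ K, H q.2 (ν q) - ε ≤ -⟪vt q, ν q⟫ := by
  intro ε hε
  let X := ℝ × EuclideanSpace ℝ (Fin N)
  let E := EuclideanSpace ℝ (Fin N)
  -- Extend ν to a continuous function on all of X by Tietze's theorem.
  obtain ⟨ν', hν'⟩ := (⟨K.restrict ν, hν.restrict⟩ : C(K, E)).exists_restrict_eq hK.isClosed
  have hν'eq : ∀ q ∈ K, ν' q = ν q := by
    intro q hq
    have := congrFun (congrArg (fun f : C(K, E) => (f : K → E)) hν') ⟨q, hq⟩
    exact this
  -- The family of convex sets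
  set t : X → Set E := fun q =>
    Set.range (c q.2) ∩ {v | H q.2 (ν' q) - ε ≤ -⟪v, ν' q⟫} with ht_def
  have htconv : ∀ q, Convex ℝ (t q) := by
    intro q
    refine (hconv q.2).inter ?_
    have hlin : IsLinearMap ℝ (fun v : E => -⟪v, ν' q⟫) := by
      constructor
      · intro a b; rw [inner_add_left]; ring
      · intro m a; rw [real_inner_smul_left, smul_eq_mul]; ring
    exact convex_halfSpace_ge hlin _
  have hloc : ∀ q : X, ∃ U ∈ nhds q, ∃ g : X → E,
      ContinuousOn g U ∧ ∀ y ∈ U, g y ∈ t y := by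
    intro q
    -- choose a maximizer of a ↦ -⟪c q.2 a, ν' q⟫
    have hfc : Continuous fun a : A => -⟪c q.2 a, ν' q⟫ := by
      exact ((hc.comp (Continuous.prodMk_right q.2)).inner continuous_const).neg
    obtain ⟨a₀, -, ha₀⟩ := isCompact_univ.exists_isMaxOn Set.univ_nonempty hfc.continuousOn
    rw [isMaxOn_iff] at ha₀
    -- the open tube
    set S : Set (X × A) :=
      {w | -⟪c w.1.2 w.2, ν' w.1⟫ < -⟪c w.1.2 a₀, ν' w.1⟫ + ε} with hS_def
    have h1 : Continuous fun w : X × A => c w.1.2 w.2 :=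
      hc.comp ((continuous_snd.comp continuous_fst).prodMk continuous_snd)
    have h1' : Continuous fun w : X × A => c w.1.2 a₀ :=
      hc.comp ((continuous_snd.comp continuous_fst).prodMk continuous_const)
    have h2 : Continuous fun w : X × A => ν' w.1 := ν'.continuous.comp continuous_fst
    have hf1 : Continuous fun w : X × A => -⟪c w.1.2 w.2, ν' w.1⟫ :=
      (Continuous.inner (𝕜 := ℝ) h1 h2).neg
    have hf2 : Continuous fun w : X × A => -⟪c w.1.2 a₀, ν' w.1⟫ + ε :=
      ((Continuous.inner (𝕜 := ℝ) h1' h2).neg).add continuous_const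
    have hSopen : IsOpen S := isOpen_lt hf1 hf2
    have hsub : ({q} : Set X) ×ˢ (Set.univ : Set A) ⊆ S := by
      rintro ⟨y, a⟩ ⟨hy, -⟩
      simp only [Set.mem_singleton_iff] at hy
      subst hy
      exact lt_of_le_of_lt (ha₀ a trivial) (lt_add_of_pos_right _ hε)
    obtain ⟨u, v, huo, -, hqu, hv, huv⟩ :=
      generalized_tube_lemma isCompact_singleton isCompact_univ hSopen hsub
    refine ⟨u, huo.mem_nhds (hqu rfl), fun y => c y.2 a₀, ?_, ?_⟩
    · exact (hc.comp (continuous_snd.prodMk continuous_const)).continuousOn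
    · intro y hy
      refine ⟨Set.mem_range_self a₀, ?_⟩
      have hle : H y.2 (ν' y) ≤ -⟪c y.2 a₀, ν' y⟫ + ε := by
        rw [hH]
        refine ciSup_le fun a => le_of_lt ?_
        exact huv (Set.mk_mem_prod hy (hv trivial))
      simp only [Set.mem_setOf_eq]
      linarith
  obtain ⟨g, hg⟩ := exists_continuous_forall_mem_convex_of_local htconv hloc
  refine ⟨g, g.continuous, fun t' x => (hg (t', x)).1, fun q hq => ?_⟩
  have := (hg q).2
  simp only [Set.mem_setOf_eq] at this
  rwa [hν'eq q hq] at this
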